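/- Suppose d = 2. Then the lower bound in the trade-off relation is sharp and attained by taking 𝒜' = 𝒜: the infimum over all orthonormal bases {a'_1, a'_2} of H of ε(𝒜,𝒜') + η(𝒜',ℬ) and the infimum over all orthonormal bases {a'_1, a'_2} of Δ(𝒜,𝒜',ℬ) are both equal to η(𝒜,ℬ) = |⟨a_1, b_1⟩| · √(1 − |⟨a_1, b_1⟩|²), and both infima are attained when a'_i = a_i for all i. -/

import Mathlib

open scoped ComplexInnerProductSpace

noncomputable section

variable {H : Type*} [NormedAddCommGroup H] [InnerProductSpace ℂ H] [FiniteDimensional ℂ H]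
variable {ι ι' : Type*} [Fintype ι] [Fintype ι']

/-- The rank-one projector `|v⟩⟨v|`. -/
def ketbra (v : H) : H →ₗ[ℂ] H where
  toFun x := ⟪v, x⟫ • v
  map_add' x y := by simp [inner_add_right, add_smul]
  map_smul' c x := by simp [inner_smul_right, mul_smul]

/-- A density operator: self-adjoint, positive semidefinite, trace one. -/
def IsDensity (ρ : H →ₗ[ℂ] H) : Prop :=
  LinearMap.IsSymmetric ρ ∧ (∀ x : H, 0 ≤ (⟪x, ρ x⟫).re) ∧
    LinearMap.trace ℂ H ρ = 1

/-- The state-dependent error `ε_ρ(𝒜,𝒜')`. -/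
def sdError (a a' : ι → H) (ρ : H →ₗ[ℂ] H) : ℝ :=
  ⨆ i : ι, ‖LinearMap.trace ℂ H (ρ ∘ₗ (ketbra (a i) - ketbra (a' i)))‖

/-- The state-independent error `ε(𝒜,𝒜')`. -/
def siError (a a' : ι → H) : ℝ :=
  ⨆ ρ : {ρ : H →ₗ[ℂ] H // IsDensity ρ}, sdError a a' ρ.1

/-- The operator `|b_i⟩⟨b_i| − Σ_j |⟨a'_j, b_i⟩|² |a'_j⟩⟨a'_j|`. -/
def distOp (a' : ι' → H) (b : ι → H) (i : ι) : H →ₗ[ℂ] H :=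
  ketbra (b i) - ∑ j : ι', (‖⟪a' j, b i⟫‖ ^ 2 : ℂ) • ketbra (a' j)

/-- The state-dependent disturbance `η_ρ(𝒜',ℬ)`. -/
def sdDist (a' : ι' → H) (b : ι → H) (ρ : H →ₗ[ℂ] H) : ℝ :=
  ⨆ i : ι, ‖LinearMap.trace ℂ H (ρ ∘ₗ distOp a' b i)‖

/-- The state-independent disturbance `η(𝒜',ℬ)`. -/
def siDist (a' : ι' → H) (b : ι → H) : ℝ :=
  ⨆ ρ : {ρ : H →ₗ[ℂ] H // IsDensity ρ}, sdDist a' b ρ.1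

/-- The state-independent overall error `Δ(𝒜,𝒜',ℬ)`. -/
def siOverall (a a' b : ι → H) : ℝ :=
  ⨆ ρ : {ρ : H →ₗ[ℂ] H // IsDensity ρ}, (sdError a a' ρ.1 + sdDist a' b ρ.1)

set_option linter.unusedSectionVars false

section Aux
variable {κ : Type*} [Fintype κ]

lemma ketbra_apply (v x : H) : ketbra v x = ⟪v, x⟫ • v := rfl

/-- Trace of a linear map via an orthonormal basis. -/
lemma trace_eq_sum_inner (c : OrthonormalBasis κ ℂ H) (f : H →ₗ[ℂ] H) :
    LinearMap.trace ℂ H f = ∑ i, ⟪c i, f (c i)⟫ := by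
  classical
  rw [LinearMap.trace_eq_matrix_trace ℂ c.toBasis, Matrix.trace]
  congr 1
  ext i
  rw [Matrix.diag_apply, LinearMap.toMatrix_apply, c.coe_toBasis_repr_apply,
    c.repr_apply_apply, c.coe_toBasis]

lemma trace_comp_ketbra (c : OrthonormalBasis κ ℂ H) (ρ : H →ₗ[ℂ] H) (v : H) :
    LinearMap.trace ℂ H (ρ ∘ₗ ketbra v) = ⟪v, ρ v⟫ := by
  rw [trace_eq_sum_inner c]
  have : ∀ i, ⟪c i, (ρ ∘ₗ ketbra v) (c i)⟫ = ⟪v, c i⟫ * ⟪c i, ρ v⟫ := by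
    intro i
    simp [ketbra_apply, inner_smul_right]
  simp_rw [this]
  exact c.sum_inner_mul_inner v (ρ v)

lemma trace_ketbra (c : OrthonormalBasis κ ℂ H) (v : H) :
    LinearMap.trace ℂ H (ketbra v) = (‖v‖ ^ 2 : ℝ) := by
  have := trace_comp_ketbra c (LinearMap.id) v
  simpa [inner_self_eq_norm_sq_to_K] using this

lemma trace_comp_distOp (c : OrthonormalBasis κ ℂ H) (a' : ι' → H) (b : ι → H)
    (ρ : H →ₗ[ℂ] H) (i : ι) :
    LinearMap.trace ℂ H (ρ ∘ₗ distOp a' b i)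
      = ⟪b i, ρ (b i)⟫ - ∑ j, (‖⟪a' j, b i⟫‖ ^ 2 : ℂ) * ⟪a' j, ρ (a' j)⟫ := by
  have hsum : ρ ∘ₗ (∑ j : ι', (‖⟪a' j, b i⟫‖ ^ 2 : ℂ) • ketbra (a' j))
      = ∑ j : ι', (‖⟪a' j, b i⟫‖ ^ 2 : ℂ) • (ρ ∘ₗ ketbra (a' j)) := by
    refine LinearMap.ext fun x => ?_
    simp [LinearMap.sum_apply, map_sum, map_smul]
  rw [distOp, LinearMap.comp_sub, map_sub, trace_comp_ketbra c, hsum, map_sum]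
  congr 1
  refine Finset.sum_congr rfl fun j _ => ?_
  rw [map_smul, trace_comp_ketbra c, smul_eq_mul]

end Aux
section Aux2
variable {κ : Type*} [Fintype κ]

lemma conj_mul_self_norm (z : ℂ) : (starRingEnd ℂ) z * z = ((‖z‖ ^ 2 : ℝ) : ℂ) := by
  rw [mul_comm, Complex.mul_conj, Complex.normSq_eq_norm_sq]

lemma IsDensity.inner_real {ρ : H →ₗ[ℂ] H} (hρ : IsDensity ρ) (x : H) :
    ⟪x, ρ x⟫ = (((⟪x, ρ x⟫).re : ℝ) : ℂ) := by
  have h1 : (starRingEnd ℂ) ⟪x, ρ x⟫ = ⟪x, ρ x⟫ := by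
    rw [inner_conj_symm]
    exact hρ.1 x x
  exact (Complex.conj_eq_iff_re.mp h1).symm

lemma IsDensity.inner_swap {ρ : H →ₗ[ℂ] H} (hρ : IsDensity ρ) (x y : H) :
    ⟪y, ρ x⟫ = (starRingEnd ℂ) ⟪x, ρ y⟫ := by
  rw [inner_conj_symm]
  exact (hρ.1 y x).symm

lemma IsDensity.sum_diag {ρ : H →ₗ[ℂ] H} (hρ : IsDensity ρ) (c : OrthonormalBasis κ ℂ H) :
    ∑ i, ⟪c i, ρ (c i)⟫ = 1 := by
  rw [← trace_eq_sum_inner c, hρ.2.2]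

lemma IsDensity.sum_diag_two {ρ : H →ₗ[ℂ] H} (hρ : IsDensity ρ)
    (c : OrthonormalBasis (Fin 2) ℂ H) :
    ⟪c 0, ρ (c 0)⟫ + ⟪c 1, ρ (c 1)⟫ = 1 := by
  have := hρ.sum_diag c
  rwa [Fin.sum_univ_two] at this

lemma IsDensity.diag_norm_le_one {ρ : H →ₗ[ℂ] H} (hρ : IsDensity ρ)
    (c : OrthonormalBasis (Fin 2) ℂ H) (i : Fin 2) :
    ‖⟪c i, ρ (c i)⟫‖ ≤ 1 := by
  have hsum := hρ.sum_diag_two c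
  have h0 := hρ.inner_real (c 0)
  have h1 := hρ.inner_real (c 1)
  have hre : (⟪c 0, ρ (c 0)⟫).re + (⟪c 1, ρ (c 1)⟫).re = 1 := by
    have := congrArg Complex.re hsum
    simpa using this
  have hp0 := hρ.2.1 (c 0)
  have hp1 := hρ.2.1 (c 1)
  fin_cases i
  · show ‖⟪c 0, ρ (c 0)⟫‖ ≤ 1
    rw [h0, Complex.norm_real, Real.norm_eq_abs, abs_of_nonneg hp0]; linarith
  · show ‖⟪c 1, ρ (c 1)⟫‖ ≤ 1
    rw [h1, Complex.norm_real, Real.norm_eq_abs, abs_of_nonneg hp1]; linarith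

/-- Off-diagonal bound for a density operator in dimension 2. -/
lemma IsDensity.offdiag_le {ρ : H →ₗ[ℂ] H} (hρ : IsDensity ρ)
    (c : OrthonormalBasis (Fin 2) ℂ H) :
    2 * ‖⟪c 0, ρ (c 1)⟫‖ ≤ 1 := by
  set m : ℂ := ⟪c 0, ρ (c 1)⟫ with hm
  have hre : (⟪c 0, ρ (c 0)⟫).re + (⟪c 1, ρ (c 1)⟫).re = 1 := by
    have := congrArg Complex.re (hρ.sum_diag_two c)
    simpa using this
  by_cases h0 : m = 0
  · rw [h0]; norm_num
  · set u : ℂ := (starRingEnd ℂ) m / (‖m‖ : ℂ) with hu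
    have hm0 : (‖m‖ : ℂ) ≠ 0 := by
      simpa using (norm_ne_zero_iff.mpr h0)
    have hum : u * m = (‖m‖ : ℂ) := by
      rw [hu, div_mul_eq_mul_div, conj_mul_self_norm]
      push_cast
      rw [pow_two, mul_div_assoc, div_self hm0, mul_one]
    have huu : (starRingEnd ℂ) u * u = 1 := by
      rw [conj_mul_self_norm]
      have : ‖u‖ = 1 := by
        rw [hu, norm_div]
        simp only [RCLike.norm_conj, Complex.norm_real, Real.norm_eq_abs,
          abs_of_nonneg (norm_nonneg m)]
        exact div_self (norm_ne_zero_iff.mpr h0)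
      rw [this]; norm_num
    have hx := hρ.2.1 (c 0 - u • c 1)
    have hswap : ⟪c 1, ρ (c 0)⟫ = (starRingEnd ℂ) m := hρ.inner_swap _ _
    have hexp : ⟪c 0 - u • c 1, ρ (c 0 - u • c 1)⟫
        = ⟪c 0, ρ (c 0)⟫ + ⟪c 1, ρ (c 1)⟫ - 2 * (‖m‖ : ℂ) := by
      rw [map_sub, map_smul, inner_sub_left, inner_sub_right, inner_sub_right,
        inner_smul_left, inner_smul_right, inner_smul_right, inner_smul_left, hswap, ← hm]
      have hcum : (starRingEnd ℂ) u * (starRingEnd ℂ) m = (‖m‖ : ℂ) := by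
        rw [← map_mul, hum]
        simp
      ring_nf
      ring_nf at hcum hum huu ⊢
      linear_combination -hum - hcum + ⟪c 1, ρ (c 1)⟫ * huu
    rw [hexp] at hx
    simp only [Complex.sub_re, Complex.add_re, Complex.mul_re] at hx
    simp only [Complex.ofReal_re, Complex.ofReal_im] at hx
    norm_num at hx
    have habs : ‖m‖ = ‖m‖ := rfl
    linarith

end Aux2
section Aux3

lemma parseval_two (c : OrthonormalBasis (Fin 2) ℂ H) (v : H) (hv : ‖v‖ = 1) :
    ‖⟪c 0, v⟫‖ ^ 2 + ‖⟪c 1, v⟫‖ ^ 2 = 1 := by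
  have h := c.sum_inner_mul_inner v v
  rw [Fin.sum_univ_two] at h
  have h' : ∀ i : Fin 2, ⟪v, c i⟫ * ⟪c i, v⟫ = ((‖⟪c i, v⟫‖ ^ 2 : ℝ) : ℂ) := by
    intro i
    rw [← inner_conj_symm v (c i), conj_mul_self_norm]
  rw [h' 0, h' 1] at h
  have hvv : ⟪v, v⟫ = (1 : ℂ) := by
    rw [inner_self_eq_norm_sq_to_K, hv]
    norm_num
  rw [hvv] at h
  exact_mod_cast h

lemma isDensity_ketbra (v : H) (hv : ‖v‖ = 1) : IsDensity (ketbra v) := by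
  refine ⟨fun x y => ?_, fun x => ?_, ?_⟩
  · simp only [ketbra_apply, inner_smul_left, inner_smul_right, inner_conj_symm]
    ring
  · simp only [ketbra_apply, inner_smul_right]
    rw [← inner_conj_symm v x, conj_mul_self_norm]
    simp only [← Complex.ofReal_pow, Complex.ofReal_re]
    positivity
  · rw [trace_ketbra (stdOrthonormalBasis ℂ H), hv]
    norm_num

variable (a b : OrthonormalBasis (Fin 2) ℂ H)

lemma trace_distOp_zero {ρ : H →ₗ[ℂ] H} (hρ : IsDensity ρ) :
    LinearMap.trace ℂ H (ρ ∘ₗ distOp (⇑a) (⇑b) 0)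
      = (starRingEnd ℂ) ⟪a 0, b 0⟫ * ⟪a 1, b 0⟫ * ⟪a 0, ρ (a 1)⟫
        + ⟪a 0, b 0⟫ * (starRingEnd ℂ) ⟪a 1, b 0⟫ * (starRingEnd ℂ) ⟪a 0, ρ (a 1)⟫ := by
  have hb0 : (b 0 : H) = ⟪a 0, b 0⟫ • a 0 + ⟪a 1, b 0⟫ • a 1 := by
    have h := a.sum_repr' (b 0)
    rw [Fin.sum_univ_two] at h
    exact h.symm
  have hq : ⟪b 0, ρ (b 0)⟫
      = (starRingEnd ℂ) ⟪a 0, b 0⟫ * ⟪a 0, b 0⟫ * ⟪a 0, ρ (a 0)⟫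
        + (starRingEnd ℂ) ⟪a 0, b 0⟫ * ⟪a 1, b 0⟫ * ⟪a 0, ρ (a 1)⟫
        + (starRingEnd ℂ) ⟪a 1, b 0⟫ * ⟪a 0, b 0⟫ * ((starRingEnd ℂ) ⟪a 0, ρ (a 1)⟫)
        + (starRingEnd ℂ) ⟪a 1, b 0⟫ * ⟪a 1, b 0⟫ * ⟪a 1, ρ (a 1)⟫ := by
    conv_lhs => rw [hb0]
    simp only [map_add, map_smul, inner_add_left, inner_add_right, inner_smul_left,
      inner_smul_right, smul_eq_mul]
    rw [hρ.inner_swap (a 0) (a 1)]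
    ring
  have hA : (starRingEnd ℂ) ⟪a 0, b 0⟫ * ⟪a 0, b 0⟫ = ((‖⟪a 0, b 0⟫‖ : ℂ)) ^ 2 := by
    rw [conj_mul_self_norm]; push_cast; ring
  have hB : (starRingEnd ℂ) ⟪a 1, b 0⟫ * ⟪a 1, b 0⟫ = ((‖⟪a 1, b 0⟫‖ : ℂ)) ^ 2 := by
    rw [conj_mul_self_norm]; push_cast; ring
  rw [trace_comp_distOp a, Fin.sum_univ_two]
  linear_combination hq + ⟪a 0, ρ (a 0)⟫ * hA + ⟪a 1, ρ (a 1)⟫ * hB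

lemma trace_distOp_one_neg {ρ : H →ₗ[ℂ] H} (hρ : IsDensity ρ) :
    LinearMap.trace ℂ H (ρ ∘ₗ distOp (⇑a) (⇑b) 1)
      = - LinearMap.trace ℂ H (ρ ∘ₗ distOp (⇑a) (⇑b) 0) := by
  have hQ := hρ.sum_diag_two b
  have hP := hρ.sum_diag_two a
  have hca0 : ((‖⟪a 0, b 0⟫‖ : ℂ)) ^ 2 + ((‖⟪a 0, b 1⟫‖ : ℂ)) ^ 2 = 1 := by
    have h := parseval_two b (a 0) (a.orthonormal.1 0)
    rw [norm_inner_symm (b 0), norm_inner_symm (b 1)] at h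
    exact_mod_cast h
  have hca1 : ((‖⟪a 1, b 0⟫‖ : ℂ)) ^ 2 + ((‖⟪a 1, b 1⟫‖ : ℂ)) ^ 2 = 1 := by
    have h := parseval_two b (a 1) (a.orthonormal.1 1)
    rw [norm_inner_symm (b 0), norm_inner_symm (b 1)] at h
    exact_mod_cast h
  rw [trace_comp_distOp a, trace_comp_distOp a, Fin.sum_univ_two, Fin.sum_univ_two]
  linear_combination hQ - ⟪a 0, ρ (a 0)⟫ * hca0 - ⟪a 1, ρ (a 1)⟫ * hca1 - hP

lemma dist_bound {ρ : H →ₗ[ℂ] H} (hρ : IsDensity ρ) :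
    ‖LinearMap.trace ℂ H (ρ ∘ₗ distOp (⇑a) (⇑b) 0)‖ ≤ ‖⟪a 0, b 0⟫‖ * ‖⟪a 1, b 0⟫‖ := by
  rw [trace_distOp_zero a b hρ]
  have h1 := norm_add_le ((starRingEnd ℂ) ⟪a 0, b 0⟫ * ⟪a 1, b 0⟫ * ⟪a 0, ρ (a 1)⟫)
    (⟪a 0, b 0⟫ * (starRingEnd ℂ) ⟪a 1, b 0⟫ * (starRingEnd ℂ) ⟪a 0, ρ (a 1)⟫)
  have hm := hρ.offdiag_le a
  have e1 : ‖(starRingEnd ℂ) ⟪a 0, b 0⟫ * ⟪a 1, b 0⟫ * ⟪a 0, ρ (a 1)⟫‖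
      = ‖⟪a 0, b 0⟫‖ * ‖⟪a 1, b 0⟫‖ * ‖⟪a 0, ρ (a 1)⟫‖ := by
    rw [norm_mul, norm_mul, RCLike.norm_conj]
  have e2 : ‖⟪a 0, b 0⟫ * (starRingEnd ℂ) ⟪a 1, b 0⟫ * (starRingEnd ℂ) ⟪a 0, ρ (a 1)⟫‖
      = ‖⟪a 0, b 0⟫‖ * ‖⟪a 1, b 0⟫‖ * ‖⟪a 0, ρ (a 1)⟫‖ := by
    rw [norm_mul, norm_mul, RCLike.norm_conj, RCLike.norm_conj]
  rw [e1, e2] at h1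
  nlinarith [norm_nonneg (⟪a 0, b 0⟫), norm_nonneg (⟪a 1, b 0⟫), norm_nonneg (⟪a 0, ρ (a 1)⟫),
    mul_nonneg (norm_nonneg (⟪a 0, b 0⟫)) (norm_nonneg (⟪a 1, b 0⟫))]

lemma sqrt_term_eq : Real.sqrt (1 - ‖⟪a 0, b 0⟫‖ ^ 2) = ‖⟪a 1, b 0⟫‖ := by
  have h := parseval_two a (b 0) (b.orthonormal.1 0)
  rw [show 1 - ‖⟪a 0, b 0⟫‖ ^ 2 = ‖⟪a 1, b 0⟫‖ ^ 2 by linarith]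
  exact Real.sqrt_sq (norm_nonneg _)

end Aux3
section Aux4
variable (a b : OrthonormalBasis (Fin 2) ℂ H)

lemma exists_good_state (hα : ⟪a 0, b 0⟫ ≠ 0) (hβ : ⟪a 1, b 0⟫ ≠ 0) :
    ∃ ρ : H →ₗ[ℂ] H, IsDensity ρ ∧ (∀ i : Fin 2, ⟪a i, ρ (a i)⟫ = 1/2) ∧
      LinearMap.trace ℂ H (ρ ∘ₗ distOp (⇑a) (⇑b) 0)
        = ((‖⟪a 0, b 0⟫‖ * ‖⟪a 1, b 0⟫‖ : ℝ) : ℂ) := by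
  set α : ℂ := ⟪a 0, b 0⟫ with hαdef
  set β : ℂ := ⟪a 1, b 0⟫ with hβdef
  have hD : (‖α‖ * ‖β‖ : ℝ) ≠ 0 :=
    mul_ne_zero (norm_ne_zero_iff.mpr hα) (norm_ne_zero_iff.mpr hβ)
  have hDc : ((‖α‖ * ‖β‖ : ℝ) : ℂ) ≠ 0 := by exact_mod_cast hD
  have hAA : (starRingEnd ℂ) α * α = ((‖α‖ : ℂ)) ^ 2 := by
    rw [conj_mul_self_norm]; push_cast; ring
  have hBB : (starRingEnd ℂ) β * β = ((‖β‖ : ℂ)) ^ 2 := by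
    rw [conj_mul_self_norm]; push_cast; ring
  obtain ⟨s, hss, hsconj⟩ : ∃ s : ℂ, s * s = 1/2 ∧ (starRingEnd ℂ) s = s := by
    refine ⟨(((Real.sqrt 2)⁻¹ : ℝ) : ℂ), ?_, Complex.conj_ofReal _⟩
    have h2 : ((Real.sqrt 2)⁻¹ * (Real.sqrt 2)⁻¹ : ℝ) = 1/2 := by
      rw [← mul_inv, Real.mul_self_sqrt (by norm_num : (0:ℝ) ≤ 2)]
      norm_num
    rw [← Complex.ofReal_mul, h2]
    norm_num
  obtain ⟨ω, hωω, hω2⟩ : ∃ ω : ℂ, (starRingEnd ℂ) ω * ω = 1 ∧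
      (starRingEnd ℂ) α * β * (starRingEnd ℂ) ω = ((‖α‖ * ‖β‖ : ℝ) : ℂ) := by
    have hnum : α * (starRingEnd ℂ) β * ((starRingEnd ℂ) α * β)
        = ((‖α‖ * ‖β‖ : ℝ) : ℂ) * ((‖α‖ * ‖β‖ : ℝ) : ℂ) := by
      push_cast
      linear_combination ((starRingEnd ℂ) β * β) * hAA + ((‖α‖ : ℂ))^2 * hBB
    refine ⟨(starRingEnd ℂ) α * β / ((‖α‖ * ‖β‖ : ℝ) : ℂ), ?_, ?_⟩
    · rw [map_div₀, map_mul, Complex.conj_conj, Complex.conj_ofReal, div_mul_div_comm,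
        hnum]
      exact div_self (mul_ne_zero hDc hDc)
    · rw [map_div₀, map_mul, Complex.conj_conj, Complex.conj_ofReal]
      rw [show (starRingEnd ℂ) α * β * (α * (starRingEnd ℂ) β / ((‖α‖ * ‖β‖ : ℝ) : ℂ))
          = (α * (starRingEnd ℂ) β * ((starRingEnd ℂ) α * β)) / ((‖α‖ * ‖β‖ : ℝ) : ℂ) from by
        ring]
      rw [hnum]
      exact mul_div_cancel_right₀ _ hDc
  have hω2' : α * (starRingEnd ℂ) β * ω = ((‖α‖ * ‖β‖ : ℝ) : ℂ) := by
    have h := congrArg (starRingEnd ℂ) hω2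
    simpa [map_mul, Complex.conj_conj, Complex.conj_ofReal] using h
  have horth := orthonormal_iff_ite.mp a.orthonormal
  have h00 : ⟪(a 0 : H), a 0⟫ = 1 := by simpa using horth 0 0
  have h01 : ⟪(a 0 : H), a 1⟫ = 0 := by simpa using horth 0 1
  have h10 : ⟪(a 1 : H), a 0⟫ = 0 := by simpa using horth 1 0
  have h11 : ⟪(a 1 : H), a 1⟫ = 1 := by simpa using horth 1 1
  set e : H := s • a 0 + (s * ω) • a 1 with hedef
  have h0e : ⟪(a 0 : H), e⟫ = s := by
    simp [hedef, inner_add_right, inner_smul_right, h00, h01]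
  have h1e : ⟪(a 1 : H), e⟫ = s * ω := by
    simp [hedef, inner_add_right, inner_smul_right, h10, h11]
  have he0 : ⟪e, (a 0 : H)⟫ = s := by
    rw [← inner_conj_symm e (a 0), h0e, hsconj]
  have he1 : ⟪e, (a 1 : H)⟫ = s * (starRingEnd ℂ) ω := by
    rw [← inner_conj_symm e (a 1), h1e, map_mul, hsconj]
  have hee : ⟪e, e⟫ = (1 : ℂ) := by
    rw [hedef]
    simp only [inner_add_left, inner_add_right, inner_smul_left, inner_smul_right,
      h00, h01, h10, h11, map_mul, hsconj, mul_zero, mul_one, zero_add, add_zero]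
    linear_combination (s * s) * hωω + 2 * hss
  have hnorme : ‖e‖ = 1 := by
    have h2 : ‖e‖ ^ 2 = 1 := by
      have h := inner_self_eq_norm_sq_to_K (𝕜 := ℂ) (x := e)
      rw [hee] at h
      exact Complex.ofReal_injective (by simpa using h.symm)
    nlinarith [norm_nonneg e]
  refine ⟨ketbra e, isDensity_ketbra e hnorme, ?_, ?_⟩
  · intro i
    fin_cases i
    · show ⟪(a 0 : H), ketbra e (a 0)⟫ = 1/2
      rw [ketbra_apply, inner_smul_right, he0, h0e, hss]
    · show ⟪(a 1 : H), ketbra e (a 1)⟫ = 1/2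
      rw [ketbra_apply, inner_smul_right, he1, h1e]
      linear_combination (1/2 : ℂ) * hωω + ((starRingEnd ℂ) ω * ω) * hss
  · have hm : ⟪(a 0 : H), ketbra e (a 1)⟫ = (1/2 : ℂ) * (starRingEnd ℂ) ω := by
      rw [ketbra_apply, inner_smul_right, he1, h0e]
      linear_combination ((starRingEnd ℂ) ω) * hss
    have hconj : (starRingEnd ℂ) ((1/2 : ℂ) * (starRingEnd ℂ) ω) = (1/2 : ℂ) * ω := by
      rw [map_mul, Complex.conj_conj, map_div₀, map_one, map_ofNat]
    rw [trace_distOp_zero a b (isDensity_ketbra e hnorme), hm, hconj]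
    linear_combination (1/2 : ℂ) * hω2 + (1/2 : ℂ) * hω2'

end Aux4
section Aux5
variable (a b a' : OrthonormalBasis (Fin 2) ℂ H)

lemma tradeoff_key {ρ : H →ₗ[ℂ] H} (hρ : IsDensity ρ)
    (hhalf : ∀ i : Fin 2, ⟪a i, ρ (a i)⟫ = 1/2) :
    ‖LinearMap.trace ℂ H (ρ ∘ₗ distOp (⇑a) (⇑b) 0)‖
      ≤ ‖LinearMap.trace ℂ H (ρ ∘ₗ (ketbra (a 0) - ketbra (a' 0)))‖
        + ‖LinearMap.trace ℂ H (ρ ∘ₗ distOp (⇑a') (⇑b) 0)‖ := by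
  have hc : ((‖⟪a 0, b 0⟫‖ : ℂ)) ^ 2 + ((‖⟪a 1, b 0⟫‖ : ℂ)) ^ 2 = 1 := by
    exact_mod_cast congrArg (fun r : ℝ => (r : ℂ)) (parseval_two a (b 0) (b.orthonormal.1 0))
  have hc'R : ‖⟪a' 0, b 0⟫‖ ^ 2 + ‖⟪a' 1, b 0⟫‖ ^ 2 = 1 :=
    parseval_two a' (b 0) (b.orthonormal.1 0)
  have hc' : ((‖⟪a' 0, b 0⟫‖ : ℂ)) ^ 2 + ((‖⟪a' 1, b 0⟫‖ : ℂ)) ^ 2 = 1 := by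
    exact_mod_cast congrArg (fun r : ℝ => (r : ℂ)) hc'R
  have hp' := hρ.sum_diag_two a'
  have hEq : LinearMap.trace ℂ H (ρ ∘ₗ distOp (⇑a) (⇑b) 0)
      = LinearMap.trace ℂ H (ρ ∘ₗ distOp (⇑a') (⇑b) 0)
        + (2 * ((‖⟪a' 0, b 0⟫‖ : ℂ)) ^ 2 - 1) * (⟪a' 0, ρ (a' 0)⟫ - 1/2) := by
    rw [trace_comp_distOp a (⇑a) (⇑b) ρ 0, trace_comp_distOp a (⇑a') (⇑b) ρ 0,
      Fin.sum_univ_two, Fin.sum_univ_two, hhalf 0, hhalf 1]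
    linear_combination (-(1:ℂ)/2) * hc + (1 - ⟪a' 0, ρ (a' 0)⟫) * hc'
      + ((‖⟪a' 1, b 0⟫‖ : ℂ)) ^ 2 * hp'
  have herr : LinearMap.trace ℂ H (ρ ∘ₗ (ketbra (a 0) - ketbra (a' 0)))
      = 1/2 - ⟪a' 0, ρ (a' 0)⟫ := by
    rw [LinearMap.comp_sub, map_sub, trace_comp_ketbra a, trace_comp_ketbra a, hhalf 0]
  have hnorm2C : ‖(2 * ((‖⟪a' 0, b 0⟫‖ : ℂ)) ^ 2 - 1)‖ ≤ 1 := by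
    have h1 : (2 * ((‖⟪a' 0, b 0⟫‖ : ℂ)) ^ 2 - 1)
        = (((2 * ‖⟪a' 0, b 0⟫‖ ^ 2 - 1 : ℝ)) : ℂ) := by push_cast; ring
    rw [h1, Complex.norm_real, Real.norm_eq_abs, abs_le]
    constructor
    · nlinarith [sq_nonneg ‖⟪a' 0, b 0⟫‖]
    · nlinarith [sq_nonneg ‖⟪a' 1, b 0⟫‖]
  calc ‖LinearMap.trace ℂ H (ρ ∘ₗ distOp (⇑a) (⇑b) 0)‖
      ≤ ‖LinearMap.trace ℂ H (ρ ∘ₗ distOp (⇑a') (⇑b) 0)‖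
        + ‖(2 * ((‖⟪a' 0, b 0⟫‖ : ℂ)) ^ 2 - 1)‖ * ‖⟪a' 0, ρ (a' 0)⟫ - 1/2‖ := by
        rw [hEq]
        refine (norm_add_le _ _).trans ?_
        rw [norm_mul]
    _ ≤ ‖LinearMap.trace ℂ H (ρ ∘ₗ distOp (⇑a') (⇑b) 0)‖ + 1 * ‖⟪a' 0, ρ (a' 0)⟫ - 1/2‖ := by
        gcongr
    _ = ‖LinearMap.trace ℂ H (ρ ∘ₗ (ketbra (a 0) - ketbra (a' 0)))‖
        + ‖LinearMap.trace ℂ H (ρ ∘ₗ distOp (⇑a') (⇑b) 0)‖ := by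
        rw [herr, one_mul, norm_sub_rev]
        ring

lemma sdError_le_two {ρ : H →ₗ[ℂ] H} (hρ : IsDensity ρ) :
    sdError (⇑a) (⇑a') ρ ≤ 2 := by
  refine ciSup_le fun i => ?_
  rw [LinearMap.comp_sub, map_sub, trace_comp_ketbra a, trace_comp_ketbra a]
  refine (norm_sub_le _ _).trans ?_
  have h1 := hρ.diag_norm_le_one a i
  have h2 := hρ.diag_norm_le_one a' i
  linarith

lemma sdDist_le_two {ρ : H →ₗ[ℂ] H} (hρ : IsDensity ρ) :
    sdDist (⇑a') (⇑b) ρ ≤ 2 := by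
  refine ciSup_le fun i => ?_
  rw [trace_comp_distOp a' (⇑a') (⇑b) ρ i, Fin.sum_univ_two]
  have hq := hρ.diag_norm_le_one b i
  have hp0 := hρ.diag_norm_le_one a' 0
  have hp1 := hρ.diag_norm_le_one a' 1
  have hcc : ‖⟪a' 0, b i⟫‖ ^ 2 + ‖⟪a' 1, b i⟫‖ ^ 2 = 1 :=
    parseval_two a' (b i) (b.orthonormal.1 i)
  refine (norm_sub_le _ _).trans ?_
  have hsum : ‖((‖⟪a' 0, b i⟫‖ : ℂ)) ^ 2 * ⟪a' 0, ρ (a' 0)⟫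
      + ((‖⟪a' 1, b i⟫‖ : ℂ)) ^ 2 * ⟪a' 1, ρ (a' 1)⟫‖ ≤ 1 := by
    refine (norm_add_le _ _).trans ?_
    rw [norm_mul, norm_mul]
    have e0 : ‖((‖⟪a' 0, b i⟫‖ : ℂ)) ^ 2‖ = ‖⟪a' 0, b i⟫‖ ^ 2 := by
      rw [norm_pow, Complex.norm_real, Real.norm_eq_abs, abs_of_nonneg (norm_nonneg _)]
    have e1 : ‖((‖⟪a' 1, b i⟫‖ : ℂ)) ^ 2‖ = ‖⟪a' 1, b i⟫‖ ^ 2 := by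
      rw [norm_pow, Complex.norm_real, Real.norm_eq_abs, abs_of_nonneg (norm_nonneg _)]
    rw [e0, e1]
    nlinarith [sq_nonneg ‖⟪a' 0, b i⟫‖, sq_nonneg ‖⟪a' 1, b i⟫‖,
      norm_nonneg (⟪a' 0, ρ (a' 0)⟫), norm_nonneg (⟪a' 1, ρ (a' 1)⟫)]
  linarith

end Aux5
section Nonneg

lemma sdError_nonneg (a a' : ι → H) (ρ : H →ₗ[ℂ] H) : 0 ≤ sdError a a' ρ :=
  Real.iSup_nonneg fun _ => norm_nonneg _

lemma sdDist_nonneg (a' : ι' → H) (b : ι → H) (ρ : H →ₗ[ℂ] H) : 0 ≤ sdDist a' b ρ :=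
  Real.iSup_nonneg fun _ => norm_nonneg _

lemma siError_nonneg (a a' : ι → H) : 0 ≤ siError a a' :=
  Real.iSup_nonneg fun ρ => sdError_nonneg a a' ρ.1

lemma siDist_nonneg (a' : ι' → H) (b : ι → H) : 0 ≤ siDist a' b :=
  Real.iSup_nonneg fun ρ => sdDist_nonneg a' b ρ.1

lemma siOverall_nonneg (a a' b : ι → H) : 0 ≤ siOverall a a' b :=
  Real.iSup_nonneg fun ρ => add_nonneg (sdError_nonneg a a' ρ.1) (sdDist_nonneg a' b ρ.1)

end Nonneg

section Main
variable (a b : OrthonormalBasis (Fin 2) ℂ H)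

lemma sdError_self (ρ : H →ₗ[ℂ] H) : sdError (⇑a) (⇑a) ρ = 0 := by
  unfold sdError
  simp only [sub_self, LinearMap.comp_zero, map_zero, norm_zero, ciSup_const]

lemma main_pieces :
    siError (⇑a) (⇑a) = 0 ∧ siDist (⇑a) (⇑b) = ‖⟪a 0, b 0⟫‖ * ‖⟪a 1, b 0⟫‖ := by
  have hden0 : IsDensity (ketbra (a 0) : H →ₗ[ℂ] H) := isDensity_ketbra _ (a.orthonormal.1 0)
  have hNE : Nonempty {ρ : H →ₗ[ℂ] H // IsDensity ρ} := ⟨⟨_, hden0⟩⟩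
  constructor
  · unfold siError
    simp only [sdError_self a, ciSup_const]
  · set KK : ℝ := ‖⟪a 0, b 0⟫‖ * ‖⟪a 1, b 0⟫‖ with hKK
    have hKnn : 0 ≤ KK := mul_nonneg (norm_nonneg _) (norm_nonneg _)
    have hub : ∀ ρ : H →ₗ[ℂ] H, IsDensity ρ → sdDist (⇑a) (⇑b) ρ ≤ KK := by
      intro ρ hρ
      refine ciSup_le fun i => ?_
      fin_cases i
      · exact dist_bound a b hρ
      · show ‖LinearMap.trace ℂ H (ρ ∘ₗ distOp (⇑a) (⇑b) 1)‖ ≤ KK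
        rw [trace_distOp_one_neg a b hρ, norm_neg]
        exact dist_bound a b hρ
    refine le_antisymm (ciSup_le fun ρ => hub ρ.1 ρ.2) ?_
    by_cases hz : ⟪a 0, b 0⟫ = 0 ∨ ⟪a 1, b 0⟫ = 0
    · have h0 : KK = 0 := by rcases hz with h | h <;> simp [hKK, h]
      rw [h0]
      exact Real.iSup_nonneg fun ρ => sdDist_nonneg _ _ _
    · push_neg at hz
      obtain ⟨ρ, hρ, _, hval⟩ := exists_good_state a b hz.1 hz.2
      have h1 : KK = ‖LinearMap.trace ℂ H (ρ ∘ₗ distOp (⇑a) (⇑b) 0)‖ := by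
        rw [hval, Complex.norm_real, Real.norm_eq_abs, abs_of_nonneg hKnn]
      have h2 : ‖LinearMap.trace ℂ H (ρ ∘ₗ distOp (⇑a) (⇑b) 0)‖ ≤ sdDist (⇑a) (⇑b) ρ :=
        le_ciSup (f := fun i : Fin 2 => ‖LinearMap.trace ℂ H (ρ ∘ₗ distOp (⇑a) (⇑b) i)‖)
          (Set.Finite.bddAbove (Set.finite_range _)) (0 : Fin 2)
      have h3 : sdDist (⇑a) (⇑b) ρ ≤ siDist (⇑a) (⇑b) := by
        refine le_ciSup (f := fun σ : {σ : H →ₗ[ℂ] H // IsDensity σ} => sdDist (⇑a) (⇑b) σ.1)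
          ⟨KK, ?_⟩ ⟨ρ, hρ⟩
        rintro x ⟨σ, rfl⟩
        exact hub σ.1 σ.2
      linarith

end Main
/-- in dimension 2 the trade-off lower bound is sharp and attained at `𝒜' = 𝒜`. -/
theorem qubit_tradeoff_sharp (a b : OrthonormalBasis (Fin 2) ℂ H) :
    ((⨅ a' : OrthonormalBasis (Fin 2) ℂ H, (siError (⇑a) (⇑a') + siDist (⇑a') (⇑b)))
        = ‖⟪a 0, b 0⟫‖ * Real.sqrt (1 - ‖⟪a 0, b 0⟫‖ ^ 2)) ∧
    ((⨅ a' : OrthonormalBasis (Fin 2) ℂ H, siOverall (⇑a) (⇑a') (⇑b))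
        = ‖⟪a 0, b 0⟫‖ * Real.sqrt (1 - ‖⟪a 0, b 0⟫‖ ^ 2)) ∧
    (siError (⇑a) (⇑a) + siDist (⇑a) (⇑b)
        = ‖⟪a 0, b 0⟫‖ * Real.sqrt (1 - ‖⟪a 0, b 0⟫‖ ^ 2)) ∧
    (siOverall (⇑a) (⇑a) (⇑b)
        = ‖⟪a 0, b 0⟫‖ * Real.sqrt (1 - ‖⟪a 0, b 0⟫‖ ^ 2)) := by
  obtain ⟨hErr0, hDist⟩ := main_pieces a b
  simp only [sqrt_term_eq a b]
  set KK : ℝ := ‖⟪a 0, b 0⟫‖ * ‖⟪a 1, b 0⟫‖ with hKK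
  have hKnn : 0 ≤ KK := mul_nonneg (norm_nonneg _) (norm_nonneg _)
  have hden0 : IsDensity (ketbra (a 0) : H →ₗ[ℂ] H) := isDensity_ketbra _ (a.orthonormal.1 0)
  have hNE : Nonempty {ρ : H →ₗ[ℂ] H // IsDensity ρ} := ⟨⟨_, hden0⟩⟩
  haveI hNEo : Nonempty (OrthonormalBasis (Fin 2) ℂ H) := ⟨a⟩
  -- conjunct 3
  have hC3 : siError (⇑a) (⇑a) + siDist (⇑a) (⇑b) = KK := by
    rw [hErr0, hDist, zero_add]
  -- conjunct 4
  have hC4 : siOverall (⇑a) (⇑a) (⇑b) = KK := by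
    have heq : siOverall (⇑a) (⇑a) (⇑b) = siDist (⇑a) (⇑b) := by
      unfold siOverall siDist
      congr 1
      funext ρ
      rw [sdError_self a ρ.1, zero_add]
    rw [heq, hDist]
  -- the key lower bound: for every a' there is a state witnessing KK
  have hlower : ∀ a' : OrthonormalBasis (Fin 2) ℂ H,
      ∃ ρ : {ρ : H →ₗ[ℂ] H // IsDensity ρ},
        KK ≤ sdError (⇑a) (⇑a') ρ.1 + sdDist (⇑a') (⇑b) ρ.1 := by
    intro a'
    by_cases hz : ⟪a 0, b 0⟫ = 0 ∨ ⟪a 1, b 0⟫ = 0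
    · refine ⟨⟨_, hden0⟩, ?_⟩
      have h0 : KK = 0 := by rcases hz with h | h <;> simp [hKK, h]
      rw [h0]
      exact add_nonneg (sdError_nonneg _ _ _) (sdDist_nonneg _ _ _)
    · push_neg at hz
      obtain ⟨ρ, hρ, hhalf, hval⟩ := exists_good_state a b hz.1 hz.2
      have h1 : KK = ‖LinearMap.trace ℂ H (ρ ∘ₗ distOp (⇑a) (⇑b) 0)‖ := by
        rw [hval, Complex.norm_real, Real.norm_eq_abs, abs_of_nonneg hKnn]
      have hkey := tradeoff_key a b a' hρ hhalf
      have herr : ‖LinearMap.trace ℂ H (ρ ∘ₗ (ketbra (a 0) - ketbra (a' 0)))‖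
          ≤ sdError (⇑a) (⇑a') ρ :=
        le_ciSup (f := fun i : Fin 2 =>
            ‖LinearMap.trace ℂ H (ρ ∘ₗ (ketbra (a i) - ketbra (a' i)))‖)
          (Set.Finite.bddAbove (Set.finite_range _)) (0 : Fin 2)
      have hdist : ‖LinearMap.trace ℂ H (ρ ∘ₗ distOp (⇑a') (⇑b) 0)‖
          ≤ sdDist (⇑a') (⇑b) ρ :=
        le_ciSup (f := fun i : Fin 2 => ‖LinearMap.trace ℂ H (ρ ∘ₗ distOp (⇑a') (⇑b) i)‖)
          (Set.Finite.bddAbove (Set.finite_range _)) (0 : Fin 2)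
      exact ⟨⟨ρ, hρ⟩, by simpa using h1 ▸ hkey.trans (by linarith)⟩
  -- conjunct 1
  have hC1 : (⨅ a' : OrthonormalBasis (Fin 2) ℂ H, (siError (⇑a) (⇑a') + siDist (⇑a') (⇑b)))
      = KK := by
    refine le_antisymm ?_ ?_
    · refine (ciInf_le ⟨0, ?_⟩ a).trans_eq hC3
      rintro x ⟨a', rfl⟩
      exact add_nonneg (siError_nonneg _ _) (siDist_nonneg _ _)
    · refine le_ciInf fun a' => ?_
      obtain ⟨⟨ρ, hρ⟩, hρle⟩ := hlower a'
      have h1 : sdError (⇑a) (⇑a') ρ ≤ siError (⇑a) (⇑a') := by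
        refine le_ciSup (f := fun σ : {σ : H →ₗ[ℂ] H // IsDensity σ} => sdError (⇑a) (⇑a') σ.1)
          ⟨2, ?_⟩ ⟨ρ, hρ⟩
        rintro x ⟨σ, rfl⟩
        exact sdError_le_two a a' σ.2
      have h2 : sdDist (⇑a') (⇑b) ρ ≤ siDist (⇑a') (⇑b) := by
        refine le_ciSup (f := fun σ : {σ : H →ₗ[ℂ] H // IsDensity σ} => sdDist (⇑a') (⇑b) σ.1)
          ⟨2, ?_⟩ ⟨ρ, hρ⟩
        rintro x ⟨σ, rfl⟩
        exact sdDist_le_two b a' σ.2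
      linarith
  -- conjunct 2
  have hC2 : (⨅ a' : OrthonormalBasis (Fin 2) ℂ H, siOverall (⇑a) (⇑a') (⇑b)) = KK := by
    refine le_antisymm ?_ ?_
    · refine (ciInf_le ⟨0, ?_⟩ a).trans_eq hC4
      rintro x ⟨a', rfl⟩
      exact siOverall_nonneg _ _ _
    · refine le_ciInf fun a' => ?_
      obtain ⟨⟨ρ, hρ⟩, hρle⟩ := hlower a'
      have h1 : sdError (⇑a) (⇑a') ρ + sdDist (⇑a') (⇑b) ρ ≤ siOverall (⇑a) (⇑a') (⇑b) := by
        refine le_ciSup (f := fun σ : {σ : H →ₗ[ℂ] H // IsDensity σ} =>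
            sdError (⇑a) (⇑a') σ.1 + sdDist (⇑a') (⇑b) σ.1) ⟨4, ?_⟩ ⟨ρ, hρ⟩
        rintro x ⟨σ, rfl⟩
        have h3 := sdError_le_two a a' σ.2
        have h4 := sdDist_le_two b a' σ.2
        show sdError (⇑a) (⇑a') σ.1 + sdDist (⇑a') (⇑b) σ.1 ≤ 4
        linarith
      linarith
  exact ⟨hC1, hC2, hC3, hC4⟩
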